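/- The function g defined on [1,∞) by g(x) = (y + sin y)/2 − x·(y − sin y)/2, where y = arccos((x−1)/(x+1)), tends to 0 as x → ∞. -/

import Mathlib

noncomputable def g (x : ℝ) : ℝ :=
  (Real.arccos ((x - 1) / (x + 1)) + Real.sin (Real.arccos ((x - 1) / (x + 1)))) / 2
    - x * (Real.arccos ((x - 1) / (x + 1)) - Real.sin (Real.arccos ((x - 1) / (x + 1)))) / 2

open Real Filter

lemma arccos_le_pi_div_sqrt {x : ℝ} (hx : 1 ≤ x) :
    Real.arccos ((x - 1) / (x + 1)) ≤ π / Real.sqrt (x + 1) := by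
  have hx1 : (0:ℝ) < x + 1 := by linarith
  set t := (x - 1) / (x + 1) with ht
  have ht0 : 0 ≤ t := div_nonneg (by linarith) hx1.le
  have ht1 : t ≤ 1 := by rw [ht, div_le_one hx1]; linarith
  set y := Real.arccos t with hy
  have hy0 : 0 ≤ y := Real.arccos_nonneg t
  have hyπ : y ≤ π := Real.arccos_le_pi t
  have hcos : Real.cos y = t := Real.cos_arccos (by linarith) ht1
  have hub : Real.cos y ≤ 1 - 2 / π ^ 2 * y ^ 2 :=
    Real.cos_le_one_sub_mul_cos_sq (by rwa [abs_of_nonneg hy0])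
  have h1t : 1 - t = 2 / (x + 1) := by
    rw [ht]; field_simp; ring
  have hπ := Real.pi_pos
  have hy2 : y ^ 2 ≤ π ^ 2 / (x + 1) := by
    have h2 : 2 / π ^ 2 * y ^ 2 ≤ 2 / (x + 1) := by rw [← h1t]; linarith [hcos.symm.le, hub]
    rw [div_mul_eq_mul_div, div_le_div_iff₀ (by positivity) hx1] at h2
    rw [le_div_iff₀ hx1]
    nlinarith
  calc y = Real.sqrt (y ^ 2) := by rw [Real.sqrt_sq hy0]
    _ ≤ Real.sqrt (π ^ 2 / (x + 1)) := Real.sqrt_le_sqrt hy2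
    _ = π / Real.sqrt (x + 1) := by
        rw [Real.sqrt_div' _ (by positivity), Real.sqrt_sq hπ.le]

theorem g_tendsto_zero : Filter.Tendsto g Filter.atTop (nhds 0) := by
  have hπ := Real.pi_pos
  set y : ℝ → ℝ := fun x => Real.arccos ((x - 1) / (x + 1)) with hy
  -- (x-1)/(x+1) → 1
  have hfrac : Tendsto (fun x : ℝ => (x - 1) / (x + 1)) atTop (nhds 1) := by
    have h2 : Tendsto (fun x : ℝ => 2 / (x + 1)) atTop (nhds 0) :=
      tendsto_const_nhds.div_atTop (tendsto_atTop_add_const_right _ _ tendsto_id)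
    have h3 := Tendsto.sub (tendsto_const_nhds : Tendsto (fun _ : ℝ => (1:ℝ)) atTop (nhds 1)) h2
    rw [sub_zero] at h3
    refine h3.congr' ?_
    filter_upwards [eventually_gt_atTop (0:ℝ)] with x hx
    field_simp
    ring
  have hytend : Tendsto y atTop (nhds 0) := by
    have := (Real.continuous_arccos.tendsto 1).comp hfrac
    simpa [hy, Real.arccos_one, Function.comp_def] using this
  have hsin : Tendsto (fun x => Real.sin (y x)) atTop (nhds 0) := by
    have := (Real.continuous_sin.tendsto 0).comp hytend
    simpa [Function.comp_def] using this
  -- the hard part : x * (y - sin y) → 0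
  have hmain : Tendsto (fun x => x * (y x - Real.sin (y x))) atTop (nhds 0) := by
    have hupper : Tendsto (fun x : ℝ => π ^ 3 / (4 * Real.sqrt (x + 1))) atTop (nhds 0) := by
      refine tendsto_const_nhds.div_atTop ?_
      have hsqrt : Tendsto Real.sqrt atTop atTop := by
        refine tendsto_atTop_atTop.2 fun b => ⟨(max b 0) ^ 2, fun x hx => ?_⟩
        calc b ≤ max b 0 := le_max_left b 0
          _ = Real.sqrt ((max b 0) ^ 2) := (Real.sqrt_sq (le_max_right b 0)).symm
          _ ≤ Real.sqrt x := Real.sqrt_le_sqrt hx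
      exact (tendsto_const_mul_atTop_of_pos (by norm_num)).mpr
        (hsqrt.comp (tendsto_atTop_add_const_right _ _ tendsto_id))
    refine tendsto_of_tendsto_of_tendsto_of_le_of_le' tendsto_const_nhds hupper ?_ ?_
    · filter_upwards [eventually_ge_atTop (1:ℝ)] with x hx
      have hy0 : 0 ≤ y x := Real.arccos_nonneg _
      have hsle : Real.sin (y x) ≤ y x := Real.sin_le hy0
      have : 0 ≤ y x - Real.sin (y x) := by linarith
      positivity
    · filter_upwards [eventually_ge_atTop (10:ℝ)] with x hx
      have hx1 : (1:ℝ) ≤ x := by linarith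
      have hxp : (0:ℝ) < x + 1 := by linarith
      have hs : (0:ℝ) < Real.sqrt (x + 1) := Real.sqrt_pos.mpr hxp
      have hs2 : Real.sqrt (x + 1) ^ 2 = x + 1 := Real.sq_sqrt hxp.le
      have hyle : y x ≤ π / Real.sqrt (x + 1) := arccos_le_pi_div_sqrt hx1
      have hy0 : 0 ≤ y x := Real.arccos_nonneg _
      -- y x ≤ 1 since sqrt(x+1) ≥ sqrt 11 > π
      have hπlt : π < Real.sqrt (x + 1) := by
        have h1 : π < 3.2 := by
          have := Real.pi_lt_d2
          linarith
        have h2 : (3.2:ℝ) ≤ Real.sqrt (x + 1) := by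
          rw [show (3.2:ℝ) = Real.sqrt (3.2 ^ 2) by
            rw [Real.sqrt_sq]; norm_num]
          exact Real.sqrt_le_sqrt (by norm_num; linarith)
        linarith
      have hy1 : y x ≤ 1 := by
        calc y x ≤ π / Real.sqrt (x + 1) := hyle
          _ ≤ 1 := by rw [div_le_one hs]; linarith
      -- y - sin y ≤ y^3 / 4
      have hcube : y x - Real.sin (y x) ≤ y x ^ 3 / 4 := by
        rcases eq_or_lt_of_le hy0 with h0 | h0
        · simp [← h0]
        · have := Real.sin_gt_sub_cube h0
          linarith [pow_pos h0 3]
      have hy3 : y x ^ 3 ≤ π ^ 3 / Real.sqrt (x + 1) ^ 3 := by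
        have := pow_le_pow_left₀ hy0 hyle 3
        rwa [div_pow] at this
      have hsin_nonneg : 0 ≤ y x - Real.sin (y x) := by
        have := Real.sin_le hy0; linarith
      calc x * (y x - Real.sin (y x)) ≤ x * (y x ^ 3 / 4) := by
            apply mul_le_mul_of_nonneg_left _ (by linarith)
            linarith
        _ ≤ x * (π ^ 3 / Real.sqrt (x + 1) ^ 3 / 4) := by
            apply mul_le_mul_of_nonneg_left _ (by linarith)
            linarith
        _ = x * π ^ 3 / (4 * Real.sqrt (x + 1) ^ 3) := by ring
        _ ≤ π ^ 3 / (4 * Real.sqrt (x + 1)) := by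
            rw [div_le_div_iff₀ (by positivity) (by positivity)]
            have hxle : x ≤ Real.sqrt (x + 1) ^ 2 := by rw [hs2]; linarith
            nlinarith [mul_le_mul_of_nonneg_right hxle
              (mul_nonneg (mul_nonneg (pow_pos hπ 3).le (by norm_num : (0:ℝ) ≤ 4)) hs.le)]
  -- assemble
  have : Tendsto (fun x => (y x + Real.sin (y x)) / 2 - x * (y x - Real.sin (y x)) / 2)
      atTop (nhds 0) := by
    have h1 := ((hytend.add hsin).div_const 2).sub (hmain.div_const 2)
    simpa using h1
  exact this.congr (fun x => by simp [g, hy])
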